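/- Define sequences u_i(t), w_i(t) in R^2 by u_0(t) = (1,0), w_0(t) = (t,-1), u_{i+1}(t) = -t·w_i(t) - u_i(t), w_{i+1}(t) = t·u_i(t) - w_i(t). Then the equation w_n(t) = (1,0) has at most n real solutions t. -/
import Mathlib


noncomputable section
open Real

/-- The pair `(u_i(t), w_i(t))` of the recursion `u_0 = (1,0)`, `w_0 = (t,-1)`,
`u_{i+1} = -t·w_i - u_i`, `w_{i+1} = t·u_i - w_i`. -/
def UW (t : ℝ) : ℕ → (ℝ × ℝ) × (ℝ × ℝ)
  | 0 => ((1, 0), (t, -1))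
  | (i + 1) => ((-t) • (UW t i).2 - (UW t i).1, t • (UW t i).1 - (UW t i).2)

/-- The sequence `u_i(t)`. -/
def useq (i : ℕ) (t : ℝ) : ℝ × ℝ := (UW t i).1

/-- The sequence `w_i(t)`. -/
def wseq (i : ℕ) (t : ℝ) : ℝ × ℝ := (UW t i).2

open Polynomial in
/-- Polynomial version of `UW`. -/
def UWpoly : ℕ → (Polynomial ℝ × Polynomial ℝ) × (Polynomial ℝ × Polynomial ℝ)
  | 0 => ((1, 0), (X, -1))
  | (i + 1) =>
      (((-X) * (UWpoly i).2.1 - (UWpoly i).1.1, (-X) * (UWpoly i).2.2 - (UWpoly i).1.2),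
       (X * (UWpoly i).1.1 - (UWpoly i).2.1, X * (UWpoly i).1.2 - (UWpoly i).2.2))

lemma eval_UWpoly (t : ℝ) (i : ℕ) :
    (((UWpoly i).1.1.eval t, (UWpoly i).1.2.eval t),
      ((UWpoly i).2.1.eval t, (UWpoly i).2.2.eval t)) = UW t i := by
  induction i with
  | zero => simp [UWpoly, UW]
  | succ i ih =>
      simp only [UWpoly, UW, ← ih, Polynomial.eval_sub, Polynomial.eval_mul,
        Polynomial.eval_neg, Polynomial.eval_X, Prod.smul_mk, Prod.mk_sub_mk, smul_eq_mul]

lemma natDegree_UWpoly (i : ℕ) :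
    (UWpoly i).1.1.natDegree ≤ 2 * i ∧ (UWpoly i).1.2.natDegree ≤ 2 * i ∧
    (UWpoly i).2.1.natDegree ≤ 2 * i + 1 ∧ (UWpoly i).2.2.natDegree ≤ 2 * i := by
  induction i with
  | zero =>
      refine ⟨?_, ?_, ?_, ?_⟩ <;> simp [UWpoly]
  | succ i ih =>
      obtain ⟨h1, h2, h3, h4⟩ := ih
      have hX : (Polynomial.X : Polynomial ℝ).natDegree ≤ 1 := le_of_eq Polynomial.natDegree_X
      refine ⟨?_, ?_, ?_, ?_⟩ <;> simp only [UWpoly] <;>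
        refine le_trans (Polynomial.natDegree_sub_le _ _) ?_
      · have := Polynomial.natDegree_mul_le (p := (-Polynomial.X : Polynomial ℝ)) (q := (UWpoly i).2.1)
        simp only [Polynomial.natDegree_neg, Polynomial.natDegree_X] at this
        omega
      · have := Polynomial.natDegree_mul_le (p := (-Polynomial.X : Polynomial ℝ)) (q := (UWpoly i).2.2)
        simp only [Polynomial.natDegree_neg, Polynomial.natDegree_X] at this
        omega
      · have := Polynomial.natDegree_mul_le (p := (Polynomial.X : Polynomial ℝ)) (q := (UWpoly i).1.1)
        simp only [Polynomial.natDegree_X] at this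
        omega
      · have := Polynomial.natDegree_mul_le (p := (Polynomial.X : Polynomial ℝ)) (q := (UWpoly i).1.2)
        simp only [Polynomial.natDegree_X] at this
        omega

lemma UW_neg (t : ℝ) (i : ℕ) :
    UW (-t) i = (((UW t i).1.1, -(UW t i).1.2), (-(UW t i).2.1, (UW t i).2.2)) := by
  induction i with
  | zero => simp [UW]
  | succ i ih =>
      simp only [UW, ih, Prod.smul_mk, Prod.mk_sub_mk, smul_eq_mul, Prod.mk.injEq,
        Prod.fst_sub, Prod.snd_sub, Prod.smul_fst, Prod.smul_snd]
      constructor <;> constructor <;> ring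

lemma UW_zero (n : ℕ) : (UW 0 n).2.2 = (-1 : ℝ) ^ (n + 1) := by
  induction n with
  | zero => simp [UW]
  | succ n ih => simp [UW, ih, pow_succ]

theorem wn_eq_e1_at_most_n_solutions (n : ℕ) (hn : 1 ≤ n) :
    {t : ℝ | wseq n t = (1, 0)}.Finite ∧ {t : ℝ | wseq n t = (1, 0)}.ncard ≤ n := by
  classical
  set p : Polynomial ℝ := (UWpoly n).2.2 with hp
  have hpeval : ∀ t : ℝ, p.eval t = (UW t n).2.2 := fun t => by
    rw [hp, ← eval_UWpoly t n]
  have hp0 : p ≠ 0 := by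
    intro h
    have := hpeval 0
    rw [h, UW_zero] at this
    simp at this
    have : (-1 : ℝ) ^ (n + 1) ≠ 0 := by positivity
    simp_all
  set S := {t : ℝ | wseq n t = (1, 0)} with hS
  set R := (p.roots.toFinset : Set ℝ) with hR
  have hSR : S ⊆ R := by
    intro t ht
    have h2 : (UW t n).2.2 = 0 := by
      have : wseq n t = (1, 0) := ht
      rw [wseq] at this
      rw [this]
    simp only [hR, Finset.mem_coe, Multiset.mem_toFinset]
    rw [Polynomial.mem_roots hp0, Polynomial.IsRoot, hpeval t, h2]
  have hRfin : R.Finite := (p.roots.toFinset).finite_toSet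
  have hSfin : S.Finite := hRfin.subset hSR
  refine ⟨hSfin, ?_⟩
  -- negation image
  set T := (fun t : ℝ => -t) '' S with hT
  have hTfin : T.Finite := hSfin.image _
  have hTR : T ⊆ R := by
    rintro x ⟨t, ht, rfl⟩
    have h2 : (UW t n).2.2 = 0 := by
      have : wseq n t = (1, 0) := ht
      rw [wseq] at this
      rw [this]
    have h2' : (UW (-t) n).2.2 = 0 := by rw [UW_neg]; exact h2
    simp only [hR, Finset.mem_coe, Multiset.mem_toFinset]
    rw [Polynomial.mem_roots hp0, Polynomial.IsRoot, hpeval (-t), h2']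
  have hdisj : Disjoint S T := by
    rw [Set.disjoint_left]
    rintro x hx ⟨t, ht, rfl⟩
    have h1 : wseq n (-t) = (1, 0) := hx
    have h2 : wseq n t = (1, 0) := ht
    rw [wseq] at h1 h2
    have := congrArg Prod.fst h1
    rw [UW_neg] at this
    simp only [h2] at this
    norm_num at this
  have hcard : (S ∪ T).ncard = S.ncard + T.ncard :=
    Set.ncard_union_eq hdisj hSfin hTfin
  have hTcard : T.ncard = S.ncard :=
    Set.ncard_image_of_injective _ neg_injective
  have hle : (S ∪ T).ncard ≤ R.ncard :=
    Set.ncard_le_ncard (Set.union_subset hSR hTR) hRfin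
  have hRcard : R.ncard ≤ 2 * n := by
    rw [hR, Set.ncard_coe_finset]
    calc p.roots.toFinset.card ≤ Multiset.card p.roots := p.roots.toFinset_card_le
      _ ≤ p.natDegree := p.card_roots'
      _ ≤ 2 * n := (natDegree_UWpoly n).2.2.2
  omega
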